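/- Let J be the complex structure on 𝔥₆ with J(e₁) = e₄, J(e₂) = e₃, J(e₅) = e₆. An automorphism f of 𝔥₆ commutes with J (i.e. f∘J = J∘f) if and only if the matrix of f in the basis e₁,…,e₆ has the form with rows: (a₁₁, 0, 0, 0, 0, 0), (0, a₂₂, a₂₃, 0, 0, 0), (0, -a₂₃, a₂₂, 0, 0, 0), (0, 0, 0, a₁₁, 0, 0), (a₅₁, a₅₂, -a₆₂, -a₆₁, a₁₁a₂₂, a₁₁a₂₃), (a₆₁, a₆₂, a₅₂, a₅₁, -a₁₁a₂₃, a₁₁a₂₂), where a₁₁ ≠ 0 and a₂₂² + a₂₃² ≠ 0. Moreover, every invertible linear map of this form is an automorphism of 𝔥₆. -/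

import Mathlib

open Matrix

/-- The Lie bracket of the nilpotent Lie algebra 𝔥₆ = (0,0,0,0,12,13) in the basis
e₁,…,e₆: the only nonzero brackets among basis vectors are [e₁,e₂] = -e₅ and
[e₁,e₃] = -e₆. -/
def h6bracket (x y : Fin 6 → ℝ) : Fin 6 → ℝ :=
  ![0, 0, 0, 0, -(x 0 * y 1 - x 1 * y 0), -(x 0 * y 2 - x 2 * y 0)]

/-- An automorphism of 𝔥₆, identified with its matrix in the basis e₁,…,e₆. -/
def IsAutH6 (f : Matrix (Fin 6) (Fin 6) ℝ) : Prop :=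
  IsUnit f ∧ ∀ x y : Fin 6 → ℝ, f.mulVec (h6bracket x y) = h6bracket (f.mulVec x) (f.mulVec y)

/-- The complex structure J on 𝔥₆ with J e₁ = e₄, J e₂ = e₃, J e₅ = e₆. -/
def J6 : Matrix (Fin 6) (Fin 6) ℝ :=
  !![0, 0, 0, -1, 0, 0;
     0, 0, -1, 0, 0, 0;
     0, 1, 0, 0, 0, 0;
     1, 0, 0, 0, 0, 0;
     0, 0, 0, 0, 0, -1;
     0, 0, 0, 0, 1, 0]

/-- The matrix form (3) appearing in Lemma 4.3. -/
def isotropyForm (a11 a22 a23 a51 a52 a61 a62 : ℝ) : Matrix (Fin 6) (Fin 6) ℝ :=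
  !![a11, 0, 0, 0, 0, 0;
     0, a22, a23, 0, 0, 0;
     0, -a23, a22, 0, 0, 0;
     0, 0, 0, a11, 0, 0;
     a51, a52, -a62, -a61, a11 * a22, a11 * a23;
     a61, a62, a52, a51, -(a11 * a23), a11 * a22]

private lemma cons_val_five' {α : Type*} (x : α) (u : Fin 5 → α) : vecCons x u 5 = u 4 := rfl

set_option maxRecDepth 8000 in
set_option maxHeartbeats 2000000 in
private lemma isotropyForm_det (a11 a22 a23 a51 a52 a61 a62 : ℝ) :
    (isotropyForm a11 a22 a23 a51 a52 a61 a62).det = (a11 ^ 2 * (a22 ^ 2 + a23 ^ 2)) ^ 2 := by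
  simp +decide [isotropyForm, Matrix.det_succ_row_zero, Fin.sum_univ_succ, Fin.succAbove]
  ring

private lemma isotropyForm_comm (a11 a22 a23 a51 a52 a61 a62 : ℝ) :
    isotropyForm a11 a22 a23 a51 a52 a61 a62 * J6 = J6 * isotropyForm a11 a22 a23 a51 a52 a61 a62 := by
  ext i j
  fin_cases i <;> fin_cases j <;>
    simp [isotropyForm, J6, Matrix.mul_apply, Fin.sum_univ_six, cons_val_five',
      Matrix.vecHead, Matrix.vecTail, Function.comp]

private lemma isotropyForm_aut (a11 a22 a23 a51 a52 a61 a62 : ℝ) (h1 : a11 ≠ 0)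
    (h2 : a22 ^ 2 + a23 ^ 2 ≠ 0) : IsAutH6 (isotropyForm a11 a22 a23 a51 a52 a61 a62) := by
  constructor
  · rw [Matrix.isUnit_iff_isUnit_det, isotropyForm_det, isUnit_iff_ne_zero]
    exact pow_ne_zero _ (mul_ne_zero (pow_ne_zero _ h1) h2)
  · intro x y
    funext i
    fin_cases i <;>
      simp [isotropyForm, h6bracket, Matrix.mulVec, dotProduct, Fin.sum_univ_six,
        cons_val_five', Matrix.vecHead, Matrix.vecTail] <;> ring

set_option maxHeartbeats 1000000 in
/-- Lemma 4.3: an automorphism f of 𝔥₆ commutes with J if and only if it has the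
form `isotropyForm` with a₁₁ ≠ 0 and a₂₂² + a₂₃² ≠ 0; moreover, every (invertible)
linear map of this form is an automorphism of 𝔥₆. -/
theorem aut_h6_commutes_with_J6_iff :
    (∀ f : Matrix (Fin 6) (Fin 6) ℝ, IsAutH6 f →
      (f * J6 = J6 * f ↔
        ∃ a11 a22 a23 a51 a52 a61 a62 : ℝ, a11 ≠ 0 ∧ a22 ^ 2 + a23 ^ 2 ≠ 0 ∧
          f = isotropyForm a11 a22 a23 a51 a52 a61 a62)) ∧
    (∀ a11 a22 a23 a51 a52 a61 a62 : ℝ, a11 ≠ 0 → a22 ^ 2 + a23 ^ 2 ≠ 0 →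
      IsAutH6 (isotropyForm a11 a22 a23 a51 a52 a61 a62)) := by
  constructor
  · intro f hf
    obtain ⟨hunit, hb⟩ := hf
    constructor
    · intro hJ
      have key : ∀ i j, (f * J6) i j = (J6 * f) i j := fun i j => by rw [hJ]
      have j20 := key 2 0; have j21 := key 2 1; have j22 := key 2 2; have j23 := key 2 3
      have j30 := key 3 0; have j31 := key 3 1; have j32 := key 3 2; have j33 := key 3 3
      have j40 := key 4 0; have j41 := key 4 1; have j42 := key 4 2; have j43 := key 4 3
      have j44 := key 4 4; have j45 := key 4 5
      simp [Matrix.mul_apply, Fin.sum_univ_six, J6, cons_val_five', Matrix.vecHead,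
        Matrix.vecTail] at j20 j21 j22 j23 j30 j31 j32 j33 j40 j41 j42 j43 j44 j45
      have c := fun (i : Fin 6) => congrFun (hb ![1,0,0,0,0,0] ![0,1,0,0,0,0]) i
      have c0 := c 0; have c1 := c 1; have c2 := c 2; have c3 := c 3
      have c4 := c 4; have c5 := c 5
      have g := fun (i : Fin 6) => congrFun (hb ![1,0,0,0,0,0] ![0,0,1,0,0,0]) i
      have g0 := g 0; have g1 := g 1; have g2 := g 2; have g3 := g 3
      have g4 := g 4; have g5 := g 5
      have d4 := congrFun (hb ![1,0,0,0,0,0] ![0,0,0,1,0,0]) 4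
      have d5 := congrFun (hb ![1,0,0,0,0,0] ![0,0,0,1,0,0]) 5
      have e4 := congrFun (hb ![0,1,0,0,0,0] ![0,0,1,0,0,0]) 4
      have e5 := congrFun (hb ![0,1,0,0,0,0] ![0,0,1,0,0,0]) 5
      have k4 := congrFun (hb ![0,1,0,0,0,0] ![0,0,0,1,0,0]) 4
      have k5 := congrFun (hb ![0,1,0,0,0,0] ![0,0,0,1,0,0]) 5
      have m4 := congrFun (hb ![0,0,1,0,0,0] ![0,0,0,1,0,0]) 4
      have m5 := congrFun (hb ![0,0,1,0,0,0] ![0,0,0,1,0,0]) 5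
      simp [h6bracket, Matrix.mulVec, dotProduct, Fin.sum_univ_six, cons_val_five',
        Matrix.vecHead, Matrix.vecTail] at c0 c1 c2 c3 c4 c5 g0 g1 g2 g3 g4 g5 d4 d5 e4 e5 k4 k5 m4 m5
      -- rewrite row 2 in terms of row 1
      have r20 : f 2 0 = -f 1 3 := by linarith only [j23]
      have r21 : f 2 1 = -f 1 2 := by linarith only [j22]
      have r22 : f 2 2 = f 1 1 := j21
      have r23 : f 2 3 = f 1 0 := j20
      simp only [r20, r21, r22, r23] at c5 g5 d5 e5 k5 m5
      -- not both f 4 4 and f 4 5 are zero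
      have hdet : f.det ≠ 0 := ((Matrix.isUnit_iff_isUnit_det f).mp hunit).ne_zero
      have hC : ¬ (f 4 4 = 0 ∧ f 4 5 = 0) := by
        rintro ⟨h1, h2⟩
        apply hdet
        apply Matrix.det_eq_zero_of_column_eq_zero 4
        intro i
        fin_cases i
        · exact c0
        · exact c1
        · exact c2
        · exact c3
        · exact h1
        · exact (by linarith only [j44, h2] : f 5 4 = 0)
      -- a11 ≠ 0
      have ha : f 0 0 ≠ 0 := by
        intro ha0
        rcases eq_or_ne (f 1 0) 0 with hp | hp
        · exact hC ⟨by linear_combination -c4 - f 0 1 * hp + f 1 1 * ha0,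
            by linear_combination -g4 - f 0 2 * hp + f 1 2 * ha0⟩
        · have hd : f 0 3 = 0 := by
            have h : f 1 0 * f 0 3 = 0 := by linear_combination -d4 + f 1 3 * ha0
            exact (mul_eq_zero.mp h).resolve_left hp
          have hbb : f 0 1 = 0 := by
            have h : f 0 1 * f 1 0 = 0 := by linear_combination k5 - f 1 2 * hd
            exact (mul_eq_zero.mp h).resolve_right hp
          have hcc : f 0 2 = 0 := by
            have h : f 0 2 * f 1 0 = 0 := by linear_combination m5 + f 1 1 * hd
            exact (mul_eq_zero.mp h).resolve_right hp
          exact hC ⟨by linear_combination -c4 - f 1 0 * hbb + f 1 1 * ha0,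
            by linear_combination -g4 - f 1 0 * hcc + f 1 2 * ha0⟩
      -- f 1 0 = 0 and f 1 3 = 0
      have hp0 : f 1 0 = 0 := by
        have h : f 1 0 * (f 0 0 ^ 2 + f 0 3 ^ 2) = 0 := by
          linear_combination (-(f 0 3)) * d4 + f 0 0 * d5
        have h2 : f 0 0 ^ 2 + f 0 3 ^ 2 ≠ 0 := by positivity
        exact (mul_eq_zero.mp h).resolve_right h2
      have hs0 : f 1 3 = 0 := by
        have h : f 0 0 * f 1 3 = 0 := by linear_combination d4 + f 0 3 * hp0
        exact (mul_eq_zero.mp h).resolve_left ha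
      -- a22² + a23² ≠ 0
      have hqr : f 1 1 ^ 2 + f 1 2 ^ 2 ≠ 0 := by
        intro h
        have hq : f 1 1 = 0 := by
          have h11 : f 1 1 ^ 2 = 0 := by linarith only [h, sq_nonneg (f 1 1), sq_nonneg (f 1 2)]
          exact pow_eq_zero_iff two_ne_zero |>.mp h11
        have hr : f 1 2 = 0 := by
          have h12 : f 1 2 ^ 2 = 0 := by linarith only [h, sq_nonneg (f 1 1), sq_nonneg (f 1 2)]
          exact pow_eq_zero_iff two_ne_zero |>.mp h12
        exact hC ⟨by linear_combination -c4 - f 0 1 * hp0 + f 0 0 * hq,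
          by linear_combination -g4 - f 0 2 * hp0 + f 0 0 * hr⟩
      -- f 0 3 = 0
      have hd0 : f 0 3 = 0 := by
        have h : f 0 3 * (f 1 1 ^ 2 + f 1 2 ^ 2) = 0 := by
          linear_combination (-(f 1 1)) * k4 - f 1 2 * m4 +
            (f 1 1 * f 0 1 + f 1 2 * f 0 2) * hs0
        exact (mul_eq_zero.mp h).resolve_right hqr
      -- f 0 2 = 0 and f 0 1 = 0
      have hc0 : f 0 2 = 0 := by
        have h : f 0 2 * (f 1 1 ^ 2 + f 1 2 ^ 2) = 0 := by
          linear_combination (-(f 1 1)) * e4 + f 1 2 * e5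
        exact (mul_eq_zero.mp h).resolve_right hqr
      have hb0 : f 0 1 = 0 := by
        have h : f 0 1 * (f 1 1 ^ 2 + f 1 2 ^ 2) = 0 := by
          linear_combination f 1 2 * e4 + f 1 1 * e5
        exact (mul_eq_zero.mp h).resolve_right hqr
      -- entries of rows 4 and 5
      have h44 : f 4 4 = f 0 0 * f 1 1 := by linear_combination -c4 - f 0 1 * hp0
      have h45 : f 4 5 = f 0 0 * f 1 2 := by linear_combination -g4 - f 0 2 * hp0
      have h54 : f 5 4 = -(f 0 0 * f 1 2) := by linarith only [j44, h45]
      have h55 : f 5 5 = f 0 0 * f 1 1 := by linarith only [j45, h44]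
      have hA0 : f 2 0 = 0 := by linarith only [r20, hs0]
      have hA3 : f 2 3 = 0 := by linarith only [r23, hp0]
      have hB0 : f 3 0 = 0 := by linarith only [j33, hd0]
      have hB1 : f 3 1 = 0 := by linarith only [j32, hc0]
      have hB2 : f 3 2 = 0 := by linarith only [j31, hb0]
      refine ⟨f 0 0, f 1 1, f 1 2, f 4 0, f 4 1, f 5 0, f 5 1, ha, hqr, ?_⟩
      ext i j
      fin_cases i <;> fin_cases j
      · rfl
      · exact hb0
      · exact hc0
      · exact hd0
      · exact c0
      · exact g0
      · exact hp0
      · rfl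
      · rfl
      · exact hs0
      · exact c1
      · exact g1
      · exact hA0
      · exact r21
      · exact r22
      · exact hA3
      · exact c2
      · exact g2
      · exact hB0
      · exact hB1
      · exact hB2
      · exact j30
      · exact c3
      · exact g3
      · rfl
      · rfl
      · exact j41
      · exact j40
      · exact h44
      · exact h45
      · rfl
      · rfl
      · exact j42.symm
      · exact j43.symm
      · exact h54
      · exact h55
    · rintro ⟨a11, a22, a23, a51, a52, a61, a62, -, -, rfl⟩
      exact isotropyForm_comm _ _ _ _ _ _ _
  · exact isotropyForm_aut
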